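/- Let ν be a measure on a measurable space S and let f, g : S → ℝ be nonnegative measurable functions. Then for all real numbers α, β with 0 < α ≤ β < 1, ENNReal.ofReal((α/β)·((1−β)/(1−α))) · ∫⁻ x, ENNReal.ofReal((β·f x + (1−β)·g x − (f x)^β·(g x)^{1−β})/(1−β)) ∂ν ≤ ∫⁻ x, ENNReal.ofReal((α·f x + (1−α)·g x − (f x)^α·(g x)^{1−α})/(1−α)) ∂ν ≤ ∫⁻ x, ENNReal.ofReal((β·f x + (1−β)·g x − (f x)^β·(g x)^{1−β})/(1−β)) ∂ν. That is, (α/β)·((1−β)/(1−α))·T_β(λ‖μ) ≤ T_α(λ‖μ) ≤ T_β(λ‖μ). -/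

import Mathlib

open MeasureTheory

private lemma exp_comb (u v θ : ℝ) (h0 : 0 ≤ θ) (h1 : θ ≤ 1) :
    Real.exp (θ * u + (1 - θ) * v) ≤ θ * Real.exp u + (1 - θ) * Real.exp v := by
  have := convexOn_exp.2 (Set.mem_univ u) (Set.mem_univ v) h0 (sub_nonneg.mpr h1)
    (by ring)
  simpa [smul_eq_mul] using this

private lemma tsallis_key (a b : ℝ) (ha : 0 ≤ a) (hb : 0 ≤ b) (α β : ℝ)
    (hα : 0 < α) (hαβ : α ≤ β) (hβ : β < 1) :
    (1 - β) * (α * a + (1 - α) * b - a ^ α * b ^ (1 - α)) ≤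
      (1 - α) * (β * a + (1 - β) * b - a ^ β * b ^ (1 - β)) ∧
    α * (β * a + (1 - β) * b - a ^ β * b ^ (1 - β)) ≤
      β * (α * a + (1 - α) * b - a ^ α * b ^ (1 - α)) := by
  have hβ0 : 0 < β := lt_of_lt_of_le hα hαβ
  have hα1 : α < 1 := lt_of_le_of_lt hαβ hβ
  rcases eq_or_lt_of_le ha with ha0 | ha
  · rw [← ha0]
    rw [Real.zero_rpow (ne_of_gt hα), Real.zero_rpow (ne_of_gt hβ0)]
    constructor <;> nlinarith
  rcases eq_or_lt_of_le hb with hb0 | hb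
  · rw [← hb0]
    rw [Real.zero_rpow (by linarith : (1:ℝ) - α ≠ 0),
        Real.zero_rpow (by linarith : (1:ℝ) - β ≠ 0)]
    constructor <;> nlinarith
  · have hab : ∀ c : ℝ, a ^ c * b ^ (1 - c) =
        Real.exp (c * Real.log a + (1 - c) * Real.log b) := by
      intro c
      rw [Real.rpow_def_of_pos ha, Real.rpow_def_of_pos hb, ← Real.exp_add]
      ring_nf
    have conc : ∀ x y θ : ℝ, 0 ≤ θ → θ ≤ 1 →
        θ * (x * a + (1 - x) * b - a ^ x * b ^ (1 - x)) +
          (1 - θ) * (y * a + (1 - y) * b - a ^ y * b ^ (1 - y)) ≤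
        (θ * x + (1 - θ) * y) * a + (1 - (θ * x + (1 - θ) * y)) * b -
          a ^ (θ * x + (1 - θ) * y) * b ^ (1 - (θ * x + (1 - θ) * y)) := by
      intro x y θ h0 h1
      rw [hab, hab, hab]
      have h := exp_comb (x * Real.log a + (1 - x) * Real.log b)
        (y * Real.log a + (1 - y) * Real.log b) θ h0 h1
      have harg : θ * (x * Real.log a + (1 - x) * Real.log b) +
          (1 - θ) * (y * Real.log a + (1 - y) * Real.log b) =
          (θ * x + (1 - θ) * y) * Real.log a +
            (1 - (θ * x + (1 - θ) * y)) * Real.log b := by ring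
      rw [harg] at h
      nlinarith [h]
    constructor
    · have h0 : (0:ℝ) ≤ (1 - β) / (1 - α) := by
        apply div_nonneg <;> linarith
      have h1 : (1 - β) / (1 - α) ≤ 1 := by
        rw [div_le_one (by linarith)]; linarith
      have h := conc α 1 ((1 - β) / (1 - α)) h0 h1
      have hne : (1 - α) ≠ 0 := by linarith
      have hpt : (1 - β) / (1 - α) * α + (1 - (1 - β) / (1 - α)) * 1 = β := by
        field_simp
        ring
      rw [hpt] at h
      simp only [Real.rpow_one, sub_self, Real.rpow_zero, mul_one, one_mul,
        zero_mul, mul_zero, add_zero] at h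
      -- h : ((1-β)/(1-α)) * φα + (1 - (1-β)/(1-α)) * (a + 0*b - a*1) ≤ φβ
      have hq : (1 - β) / (1 - α) * (α * a + (1 - α) * b - a ^ α * b ^ (1 - α)) ≤
          β * a + (1 - β) * b - a ^ β * b ^ (1 - β) := by
        nlinarith [h]
      have h1α : (0:ℝ) < 1 - α := by linarith
      calc (1 - β) * (α * a + (1 - α) * b - a ^ α * b ^ (1 - α))
          = (1 - α) * ((1 - β) / (1 - α) *
              (α * a + (1 - α) * b - a ^ α * b ^ (1 - α))) := by
            field_simp
        _ ≤ (1 - α) * (β * a + (1 - β) * b - a ^ β * b ^ (1 - β)) := by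
            apply mul_le_mul_of_nonneg_left hq (le_of_lt h1α)
    · have h0 : (0:ℝ) ≤ α / β := by positivity
      have h1 : α / β ≤ 1 := by
        rw [div_le_one hβ0]; linarith
      have h := conc β 0 (α / β) h0 h1
      have hpt : α / β * β + (1 - α / β) * 0 = α := by
        field_simp
        ring
      rw [hpt] at h
      simp only [Real.rpow_zero, sub_zero, Real.rpow_one, zero_mul, one_mul,
        mul_one, zero_add] at h
      -- h : (α/β) * φβ + (1 - α/β) * (0*a + 1*b - 1*b) ≤ φα
      have hq : α / β * (β * a + (1 - β) * b - a ^ β * b ^ (1 - β)) ≤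
          α * a + (1 - α) * b - a ^ α * b ^ (1 - α) := by
        nlinarith [h]
      calc α * (β * a + (1 - β) * b - a ^ β * b ^ (1 - β))
          = β * (α / β * (β * a + (1 - β) * b - a ^ β * b ^ (1 - β))) := by
            field_simp
        _ ≤ β * (α * a + (1 - α) * b - a ^ α * b ^ (1 - α)) := by
            apply mul_le_mul_of_nonneg_left hq (le_of_lt hβ0)

/-- Bounds among Tsallis divergences: for `0 < α ≤ β < 1`,
`(α/β)·((1-β)/(1-α))·T_β(λ‖μ) ≤ T_α(λ‖μ) ≤ T_β(λ‖μ)`. -/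
theorem tsallis_bounds {S : Type*} [MeasurableSpace S] (ν : Measure S)
    (f g : S → ℝ) (hf : Measurable f) (hg : Measurable g)
    (hf0 : ∀ x, 0 ≤ f x) (hg0 : ∀ x, 0 ≤ g x)
    (α β : ℝ) (hα : 0 < α) (hαβ : α ≤ β) (hβ : β < 1) :
    ENNReal.ofReal ((α / β) * ((1 - β) / (1 - α))) *
      ∫⁻ x, ENNReal.ofReal
        ((β * f x + (1 - β) * g x - (f x) ^ β * (g x) ^ (1 - β)) / (1 - β)) ∂ν
    ≤ ∫⁻ x, ENNReal.ofReal
        ((α * f x + (1 - α) * g x - (f x) ^ α * (g x) ^ (1 - α)) / (1 - α)) ∂ν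
    ∧
    ∫⁻ x, ENNReal.ofReal
        ((α * f x + (1 - α) * g x - (f x) ^ α * (g x) ^ (1 - α)) / (1 - α)) ∂ν
    ≤ ∫⁻ x, ENNReal.ofReal
        ((β * f x + (1 - β) * g x - (f x) ^ β * (g x) ^ (1 - β)) / (1 - β)) ∂ν := by
  have hβ0 : 0 < β := lt_of_lt_of_le hα hαβ
  have hα1 : α < 1 := lt_of_le_of_lt hαβ hβ
  have hc : (0:ℝ) ≤ (α / β) * ((1 - β) / (1 - α)) := by
    apply mul_nonneg (div_nonneg hα.le hβ0.le) (div_nonneg (by linarith) (by linarith))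
  constructor
  · rw [← lintegral_const_mul' _ _ ENNReal.ofReal_ne_top]
    apply lintegral_mono
    intro x
    dsimp only
    rw [← ENNReal.ofReal_mul hc]
    apply ENNReal.ofReal_le_ofReal
    have hk := (tsallis_key (f x) (g x) (hf0 x) (hg0 x) α β hα hαβ hβ).2
    have h1α : (0:ℝ) < 1 - α := by linarith
    have h1β : (0:ℝ) < 1 - β := by linarith
    calc α / β * ((1 - β) / (1 - α)) *
          ((β * f x + (1 - β) * g x - f x ^ β * g x ^ (1 - β)) / (1 - β))
        = (α * (β * f x + (1 - β) * g x - f x ^ β * g x ^ (1 - β))) / (β * (1 - α)) := by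
          field_simp
      _ ≤ (β * (α * f x + (1 - α) * g x - f x ^ α * g x ^ (1 - α))) / (β * (1 - α)) := by
          exact (div_le_div_iff_of_pos_right (mul_pos hβ0 h1α)).mpr hk
      _ = (α * f x + (1 - α) * g x - f x ^ α * g x ^ (1 - α)) / (1 - α) := by
          rw [mul_div_mul_left _ _ (ne_of_gt hβ0)]
  · apply lintegral_mono
    intro x
    apply ENNReal.ofReal_le_ofReal
    have hk := (tsallis_key (f x) (g x) (hf0 x) (hg0 x) α β hα hαβ hβ).1
    rw [div_le_div_iff₀ (by linarith) (by linarith)]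
    nlinarith [hk]
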